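/- Let G = ⟨S|R⟩ be a C'(1/6)-group. If there is no sublinear exhaustion for (S,R), then G satisfies the increasing partial small-cancellation condition (IPSC). (This is the paper's Lemma 3.7: if the Morse boundary of G is not σ-compact, then G satisfies the IPSC.) -/

import Mathlib

namespace SmallCancel

/-- A word over `S`: a finite sequence of letters from the symmetrized alphabet
`S ∪ S⁻¹`, encoded as pairs `(s, b)` where `b = true` denotes the letter `s`
and `b = false` denotes its formal inverse `s⁻¹`. -/
abbrev Word (S : Type) := List (S × Bool)

/-- The formal inverse of a word. -/
def wInv {S : Type} (w : Word S) : Word S := (w.map fun a => (a.1, !a.2)).reverse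

/-- A word is reduced if no letter is immediately followed by its inverse. -/
def Reduced {S : Type} (w : Word S) : Prop := w.Chain' fun a b => b ≠ (a.1, !a.2)

/-- A word is cyclically reduced if all of its cyclic shifts are reduced. -/
def CyclicallyReduced {S : Type} (w : Word S) : Prop := ∀ n, Reduced (w.rotate n)

/-- `R̄`: the set of all cyclic shifts of elements of `R` and of their inverses. -/
def cyclicClosure {S : Type} (R : Set (Word S)) : Set (Word S) :=
  {w | ∃ r ∈ R, ∃ n, w = r.rotate n ∨ w = (wInv r).rotate n}

/-- `p` is a piece with respect to `R` if it is a prefix of two distinct elements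
of `R̄`. -/
def IsPiece {S : Type} (R : Set (Word S)) (p : Word S) : Prop :=
  ∃ r₁ ∈ cyclicClosure R, ∃ r₂ ∈ cyclicClosure R, r₁ ≠ r₂ ∧ p <+: r₁ ∧ p <+: r₂

/-- The `C'(λ)` small-cancellation condition: every piece `p` that is a subword of
some `r ∈ R̄` satisfies `|p| < λ|r|`. -/
def SmallCancellation {S : Type} (R : Set (Word S)) (lam : ℝ) : Prop :=
  ∀ p, IsPiece R p → ∀ r ∈ cyclicClosure R, p <:+: r →
    (p.length : ℝ) < lam * r.length

/-- The element of the presented group `⟨S | R⟩` represented by a word `w`. -/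
def toPresented {S : Type} (R : Set (Word S)) (w : Word S) :
    PresentedGroup {g : FreeGroup S | ∃ r ∈ R, g = FreeGroup.mk r} :=
  QuotientGroup.mk (FreeGroup.mk w)

/-- A word `w` is geodesic if every word representing the same element of the
presented group `⟨S | R⟩` is at least as long as `w`. -/
def IsGeodesicWord {S : Type} (R : Set (Word S)) (w : Word S) : Prop :=
  ∀ v : Word S, toPresented R v = toPresented R w → w.length ≤ v.length

/-- The finite prefix of length `n` of an infinite word `γ`. -/
def rayPrefix {S : Type} (γ : ℕ → S × Bool) (n : ℕ) : Word S := (List.range n).map γ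

/-- A geodesic ray: an infinite word all of whose finite prefixes are geodesic. -/
def IsGeodesicRay {S : Type} (R : Set (Word S)) (γ : ℕ → S × Bool) : Prop :=
  ∀ n, IsGeodesicWord R (rayPrefix γ n)

/-- The intersection function of a ray `γ`:
`ρ_γ(t) = max{|w| : w is a subword of some r ∈ R̄ with |r| ≤ t and a subword of γ}`. -/
noncomputable def intersectionFn {S : Type} (R : Set (Word S)) (γ : ℕ → S × Bool)
    (t : ℕ) : ℕ :=
  sSup {n | ∃ w : Word S, (∃ r ∈ cyclicClosure R, r.length ≤ t ∧ w <:+: r) ∧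
    (∃ m, w <:+: rayPrefix γ m) ∧ w.length = n}

/-- A function is sublinear if `ρ(n)/n → 0`. -/
def Sublinear (ρ : ℕ → ℝ) : Prop :=
  Filter.Tendsto (fun n => ρ n / n) Filter.atTop (nhds 0)

/-- A weakly increasing function `f : ℕ → ℝ` is viable if `f(n) ≥ 6` for all `n`
and `f(n) → ∞`. -/
def Viable (f : ℕ → ℝ) : Prop :=
  Monotone f ∧ (∀ n, 6 ≤ f n) ∧ Filter.Tendsto f Filter.atTop Filter.atTop

/-- The `C'(1/f)` small-cancellation condition for a set of relators: every piece `p`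
that is a subword of some `r ∈ R̄` satisfies `|p| < |r|/f(|r|)`. -/
def CPrimeOverF {S : Type} (R : Set (Word S)) (f : ℕ → ℝ) : Prop :=
  ∀ p, IsPiece R p → ∀ r ∈ cyclicClosure R, p <:+: r →
    (p.length : ℝ) < (r.length : ℝ) / f r.length

/-- The pair `(x, R)` satisfies the `C'(1/f)` condition: every word `p` that is a
subword both of `x` and of some `r ∈ R̄` satisfies `|p| < |r|/f(|r|)`. -/
def PairCPrimeOverF {S : Type} (x : Word S) (R : Set (Word S)) (f : ℕ → ℝ) : Prop :=
  ∀ p, p <:+: x → ∀ r ∈ cyclicClosure R, p <:+: r →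
    (p.length : ℝ) < (r.length : ℝ) / f r.length

/-- The increasing partial small-cancellation condition (IPSC). -/
def IPSC {S : Type} (R : Set (Word S)) : Prop :=
  ∀ n : ℕ → ℕ, (∀ i, 0 < n i) → ∃ f : ℕ → ℝ, Viable f ∧
    ∀ K : ℕ, ∃ i, K ≤ i ∧ ∃ x y : Word S, x ++ y ∈ cyclicClosure R ∧
      n i ≤ (x ++ y).length ∧ ((x ++ y).length : ℝ) / i ≤ x.length ∧
      PairCPrimeOverF x R f

end SmallCancel

namespace SmallCancel

/-- A sublinear exhaustion for `(S, R)`: a pointwise increasing sequence of sublinear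
functions such that every geodesic ray with sublinear intersection function has its
intersection function bounded by one member of the sequence. -/
def SublinearExhaustion {S : Type} (R : Set (Word S)) : Prop :=
  ∃ ρ : ℕ → ℕ → ℝ, (∀ i, Sublinear (ρ i)) ∧ (∀ i t, ρ i t ≤ ρ (i + 1) t) ∧
    ∀ γ : ℕ → S × Bool, IsGeodesicRay R γ →
      Sublinear (fun t => (intersectionFn R γ t : ℝ)) →
      ∃ i, ∀ t, (intersectionFn R γ t : ℝ) ≤ ρ i t

end SmallCancel

namespace SmallCancel

open Filter List

variable {S : Type}

lemma mem_cc_rotate {R : Set (Word S)} {r : Word S} (h : r ∈ cyclicClosure R) (k : ℕ) :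
    r.rotate k ∈ cyclicClosure R := by
  obtain ⟨s, hs, n, h | h⟩ := h
  · exact ⟨s, hs, n + k, Or.inl (by rw [h, List.rotate_rotate])⟩
  · exact ⟨s, hs, n + k, Or.inr (by rw [h, List.rotate_rotate])⟩

lemma rotate_infix_eq {w r : Word S} (h : w <:+: r) : ∃ k y, r.rotate k = w ++ y := by
  obtain ⟨a, b, hab⟩ := h
  exact ⟨a.length, b ++ a, by
    rw [← hab, List.append_assoc, List.rotate_append_length_eq, List.append_assoc]⟩

/-! ### The slow-growth function built from an intersection function -/

noncomputable def gfn (ρ : ℕ → ℝ) (m : ℕ) : ℝ :=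
  sInf {x : ℝ | ∃ k : ℕ, m ≤ k ∧ x = (k : ℝ) / (ρ k + 1)}

lemma gfn_bddBelow {ρ : ℕ → ℝ} (hρ : ∀ k, 0 ≤ ρ k) (m : ℕ) :
    BddBelow {x : ℝ | ∃ k : ℕ, m ≤ k ∧ x = (k : ℝ) / (ρ k + 1)} := by
  refine ⟨0, ?_⟩
  rintro x ⟨k, -, rfl⟩
  have := hρ k
  positivity

lemma gfn_nonempty (ρ : ℕ → ℝ) (m : ℕ) :
    {x : ℝ | ∃ k : ℕ, m ≤ k ∧ x = (k : ℝ) / (ρ k + 1)}.Nonempty :=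
  ⟨(m : ℝ) / (ρ m + 1), m, le_rfl, rfl⟩

lemma gfn_le {ρ : ℕ → ℝ} (hρ : ∀ k, 0 ≤ ρ k) (m : ℕ) :
    gfn ρ m ≤ (m : ℝ) / (ρ m + 1) :=
  csInf_le (gfn_bddBelow hρ m) ⟨m, le_rfl, rfl⟩

lemma gfn_mono {ρ : ℕ → ℝ} (hρ : ∀ k, 0 ≤ ρ k) : Monotone (gfn ρ) := by
  intro m m' hmm'
  apply csInf_le_csInf (gfn_bddBelow hρ m) (gfn_nonempty ρ m')
  rintro x ⟨k, hk, rfl⟩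
  exact ⟨k, hmm'.trans hk, rfl⟩

lemma gfn_tendsto {ρ : ℕ → ℝ} (hρ : ∀ k, 0 ≤ ρ k) (hsub : Sublinear ρ) :
    Tendsto (gfn ρ) atTop atTop := by
  rw [tendsto_atTop]
  intro C
  set C' : ℝ := max C 1 with hC'
  have hC'pos : 0 < C' := lt_of_lt_of_le one_pos (le_max_right _ _)
  have h1 : Tendsto (fun k : ℕ => (ρ k + 1) / k) atTop (nhds 0) := by
    have he : (fun k : ℕ => (ρ k + 1) / k) = fun k : ℕ => ρ k / k + 1 / k := by
      funext k; rw [add_div]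
    rw [he]
    simpa using hsub.add tendsto_one_div_atTop_nhds_zero_nat
  have h2 : ∀ᶠ k : ℕ in atTop, (ρ k + 1) / k < 1 / C' :=
    h1.eventually (gt_mem_nhds (by positivity))
  obtain ⟨M, hM⟩ := eventually_atTop.mp h2
  rw [eventually_atTop]
  refine ⟨max M 1, fun m hm => ?_⟩
  apply le_csInf (gfn_nonempty ρ m)
  rintro x ⟨k, hk, rfl⟩
  have hkM : M ≤ k := le_trans (le_max_left _ _) (hm.trans hk)
  have hk1 : 1 ≤ k := le_trans (le_max_right _ _) (hm.trans hk)
  have hkpos : (0 : ℝ) < k := by exact_mod_cast hk1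
  have hρk : (0 : ℝ) < ρ k + 1 := by have := hρ k; linarith
  have h3 := hM k hkM
  rw [div_lt_div_iff₀ hkpos hC'pos] at h3
  have hC : C ≤ C' := le_max_left _ _
  rw [le_div_iff₀ hρk]
  nlinarith

/-! ### The candidate exhaustion family built from the adversarial sequence `n` -/

noncomputable def bfn (n : ℕ → ℕ) (j m : ℕ) : ℝ :=
  sInf {x : ℝ | ∃ i : ℕ, j ≤ i ∧ n i ≤ m ∧ x = (m : ℝ) / i}

lemma bfn_bddBelow (n : ℕ → ℕ) (j m : ℕ) :
    BddBelow {x : ℝ | ∃ i : ℕ, j ≤ i ∧ n i ≤ m ∧ x = (m : ℝ) / i} := by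
  refine ⟨0, ?_⟩
  rintro x ⟨i, -, -, rfl⟩
  positivity

lemma bfn_nonneg (n : ℕ → ℕ) (j m : ℕ) : 0 ≤ bfn n j m := by
  apply Real.sInf_nonneg
  rintro x ⟨i, -, -, rfl⟩
  positivity

lemma bfn_le {n : ℕ → ℕ} {j m i : ℕ} (hji : j ≤ i) (hnm : n i ≤ m) :
    bfn n j m ≤ (m : ℝ) / i :=
  csInf_le (bfn_bddBelow n j m) ⟨i, hji, hnm, rfl⟩

noncomputable def cfn (n : ℕ → ℕ) (j m : ℕ) : ℝ :=
  if n j ≤ m then bfn n j m else 0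

lemma cfn_nonneg (n : ℕ → ℕ) (j m : ℕ) : 0 ≤ cfn n j m := by
  unfold cfn; split
  · exact bfn_nonneg n j m
  · exact le_rfl

lemma cfn_le_self (n : ℕ → ℕ) (j m : ℕ) : cfn n j m ≤ (m : ℝ) := by
  unfold cfn; split
  · rename_i h
    rcases Nat.eq_zero_or_pos j with hj | hj
    · subst hj
      exact (by simpa using bfn_le (le_refl 0) h : bfn n 0 m ≤ 0).trans (Nat.cast_nonneg m)
    · refine (bfn_le le_rfl h).trans ?_
      apply div_le_self (by positivity)
      exact_mod_cast hj
  · positivity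

noncomputable def rawρ (n : ℕ → ℕ) (j t : ℕ) : ℝ :=
  (j.unpair.2 : ℝ) +
    (Finset.range (t + 1)).sup' (by simp) (fun m => cfn n j.unpair.1 m)

lemma le_rawρ (n : ℕ → ℕ) (j : ℕ) {m t : ℕ} (hm : m ≤ t) :
    (j.unpair.2 : ℝ) + cfn n j.unpair.1 m ≤ rawρ n j t :=
  add_le_add_right (Finset.le_sup' _ (Finset.mem_range.mpr (by omega : m < t + 1))) _

lemma rawρ_nonneg (n : ℕ → ℕ) (j t : ℕ) : 0 ≤ rawρ n j t :=
  le_trans (add_nonneg (Nat.cast_nonneg _) (cfn_nonneg _ _ _)) (le_rawρ n j (Nat.zero_le t) :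
    (j.unpair.2 : ℝ) + cfn n j.unpair.1 0 ≤ rawρ n j t)

lemma sublinear_rawρ (n : ℕ → ℕ) (j : ℕ) :
    Sublinear (fun t => rawρ n j t) := by
  rw [Sublinear, Metric.tendsto_atTop]
  intro ε hε
  set j₁ := j.unpair.1 with hj₁
  set j₂ := j.unpair.2 with hj₂
  set i₀ : ℕ := max j₁ ⌈2 / ε⌉₊ with hi₀
  have hi₀ε : 2 / ε ≤ (i₀ : ℝ) :=
    le_trans (Nat.le_ceil _) (by exact_mod_cast le_max_right _ _)
  have hi₀pos : (0 : ℝ) < i₀ := lt_of_lt_of_le (by positivity) hi₀ε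
  set M : ℕ := n i₀ with hMdef
  have hcfn : ∀ m t : ℕ, m ≤ t → cfn n j₁ m ≤ (M : ℝ) + ε / 2 * t := by
    intro m t hmt
    have htnn : (0 : ℝ) ≤ ε / 2 * t := by positivity
    rcases lt_or_ge m M with hmM | hmM
    · have : (m : ℝ) ≤ (M : ℝ) := by exact_mod_cast hmM.le
      linarith [cfn_le_self n j₁ m]
    · have h1 : cfn n j₁ m ≤ (m : ℝ) / i₀ := by
        unfold cfn; split
        · exact bfn_le (le_max_left _ _) hmM
        · positivity
      have h2 : (m : ℝ) / i₀ ≤ ε / 2 * m := by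
        rw [div_le_iff₀ hi₀pos]
        have h3 : 2 / ε * (ε / 2 * (m : ℝ)) ≤ i₀ * (ε / 2 * m) :=
          mul_le_mul_of_nonneg_right hi₀ε (by positivity)
        calc (m : ℝ) = 2 / ε * (ε / 2 * m) := by field_simp
          _ ≤ i₀ * (ε / 2 * m) := h3
          _ = ε / 2 * m * i₀ := by ring
      have h4 : ε / 2 * (m : ℝ) ≤ ε / 2 * t :=
        mul_le_mul_of_nonneg_left (by exact_mod_cast hmt) (by positivity)
      have hM0 : (0 : ℝ) ≤ M := Nat.cast_nonneg _
      linarith [h1.trans (h2.trans h4)]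
  have hsup : ∀ t : ℕ, rawρ n j t ≤ ((j₂ : ℝ) + M) + ε / 2 * t := by
    intro t
    have : (Finset.range (t + 1)).sup' (by simp) (fun m => cfn n j₁ m)
        ≤ (M : ℝ) + ε / 2 * t := by
      apply Finset.sup'_le
      intro m hm
      exact hcfn m t (Nat.lt_succ_iff.mp (Finset.mem_range.mp hm))
    unfold rawρ
    rw [← hj₁, ← hj₂]
    linarith
  obtain ⟨N₀, hN₀⟩ := exists_nat_gt (((j₂ : ℝ) + M) / (ε / 2))
  refine ⟨N₀ + 1, fun t ht => ?_⟩
  have htpos : (0 : ℝ) < t := by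
    have : 1 ≤ t := by omega
    exact_mod_cast this
  have hJM : (0 : ℝ) ≤ (j₂ : ℝ) + M := by positivity
  have hNt : ((j₂ : ℝ) + M) < ε / 2 * t := by
    have h5 : ((j₂ : ℝ) + M) < ε / 2 * N₀ := by
      rw [div_lt_iff₀ (by positivity)] at hN₀
      linarith
    have h6 : (N₀ : ℝ) ≤ t := by exact_mod_cast (by omega : N₀ ≤ t)
    nlinarith
  have h7 : rawρ n j t < ε * t := by
    have := hsup t
    linarith
  have h8 : rawρ n j t / t < ε := by
    rw [div_lt_iff₀ htpos]
    linarith [h7]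
  rw [Real.dist_0_eq_abs, abs_of_nonneg (div_nonneg (rawρ_nonneg n j t) (Nat.cast_nonneg t))]
  exact h8

noncomputable def ρfam (n : ℕ → ℕ) (j t : ℕ) : ℝ :=
  ∑ j' ∈ Finset.range (j + 1), rawρ n j' t

lemma ρfam_nonneg (n : ℕ → ℕ) (j t : ℕ) : 0 ≤ ρfam n j t :=
  Finset.sum_nonneg fun i _ => rawρ_nonneg n i t

lemma rawρ_le_ρfam (n : ℕ → ℕ) (j t : ℕ) : rawρ n j t ≤ ρfam n j t :=
  Finset.single_le_sum (fun i _ => rawρ_nonneg n i t)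
    (Finset.mem_range.mpr (Nat.lt_succ_self j))

lemma sublinear_ρfam (n : ℕ → ℕ) (j : ℕ) : Sublinear (ρfam n j) := by
  rw [Sublinear]
  have he : (fun t : ℕ => ρfam n j t / t)
      = fun t : ℕ => ∑ j' ∈ Finset.range (j + 1), rawρ n j' t / t := by
    funext t; rw [ρfam, Finset.sum_div]
  rw [he]
  have h0 : (0 : ℝ) = ∑ _j' ∈ Finset.range (j + 1), (0 : ℝ) := by simp
  rw [h0]
  exact tendsto_finset_sum _ fun j' _ => sublinear_rawρ n j'

lemma ρfam_mono (n : ℕ → ℕ) (j t : ℕ) : ρfam n j t ≤ ρfam n (j + 1) t :=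
  Finset.sum_le_sum_of_subset_of_nonneg
    (Finset.range_subset_range.mpr (by omega)) (fun i _ _ => rawρ_nonneg n i t)

end SmallCancel

namespace SmallCancel

open Filter List

variable {S : Type}

/-- Key lemma: a prefix of a long relator that is also a subword of a ray `γ`
satisfies the `C'(1/f)` pair condition for the viable function built from the
intersection function of `γ`. -/
lemma pair_cprime_of_ray {R : Set (Word S)} (hSC : SmallCancellation R (1/6))
    (hne : ∀ r ∈ cyclicClosure R, r ≠ [])
    (γ : ℕ → S × Bool) (N₆ : ℕ)
    (hN₆ : ∀ m, N₆ ≤ m → 6 ≤ gfn (fun k => (intersectionFn R γ k : ℝ)) m)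
    {w r₀ : Word S} (hr₀ : r₀ ∈ cyclicClosure R) (hw : w <+: r₀)
    (hlen : N₆ ≤ r₀.length) (hwγ : ∃ M, w <:+: rayPrefix γ M) :
    PairCPrimeOverF w R
      (fun m => max 6 (gfn (fun k => (intersectionFn R γ k : ℝ)) m)) := by
  set ρg : ℕ → ℝ := fun k => (intersectionFn R γ k : ℝ) with hρg
  have hρ0 : ∀ k, 0 ≤ ρg k := fun k => Nat.cast_nonneg _
  intro p hpw r' hr' hpr'
  set m' := r'.length with hm'
  have hm'pos : 0 < m' := List.length_pos_iff.mpr (hne r' hr')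
  have hpρ : (p.length : ℝ) ≤ ρg m' := by
    have hmem : p.length ∈ {nn | ∃ w' : Word S,
        (∃ rr ∈ cyclicClosure R, rr.length ≤ m' ∧ w' <:+: rr) ∧
        (∃ M, w' <:+: rayPrefix γ M) ∧ w'.length = nn} := by
      obtain ⟨M, hM⟩ := hwγ
      exact ⟨p, ⟨r', hr', le_rfl, hpr'⟩, ⟨M, hpw.trans hM⟩, rfl⟩
    have hbdd : BddAbove {nn | ∃ w' : Word S,
        (∃ rr ∈ cyclicClosure R, rr.length ≤ m' ∧ w' <:+: rr) ∧
        (∃ M, w' <:+: rayPrefix γ M) ∧ w'.length = nn} := by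
      refine ⟨m', ?_⟩
      rintro nn ⟨w', ⟨rr, hrr, hlrr, hinf⟩, -, rfl⟩
      exact hinf.length_le.trans hlrr
    have h := le_csSup hbdd hmem
    have h2 : p.length ≤ intersectionFn R γ m' := h
    exact Nat.cast_le.mpr h2
  show (p.length : ℝ) < (m' : ℝ) / max 6 (gfn ρg m')
  rcases le_or_gt 6 (gfn ρg m') with hg | hg
  · rw [max_eq_right hg]
    have hg0 : (0 : ℝ) < gfn ρg m' := lt_of_lt_of_le (by norm_num) hg
    have h3 : (0 : ℝ) < ρg m' + 1 := by have := hρ0 m'; linarith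
    have h1 : gfn ρg m' * (ρg m' + 1) ≤ (m' : ℝ) := by
      have h2 := gfn_le hρ0 m'
      rwa [le_div_iff₀ h3] at h2
    have h4 : ρg m' + 1 ≤ (m' : ℝ) / gfn ρg m' := by
      rw [le_div_iff₀ hg0]; nlinarith
    linarith
  · rw [max_eq_left hg.le]
    have hpr₀ : p <:+: r₀ := hpw.trans hw.isInfix
    obtain ⟨k₁, y₁, h₁⟩ := rotate_infix_eq hpr₀
    obtain ⟨k₂, y₂, h₂⟩ := rotate_infix_eq hpr'
    have hmem₁ : r₀.rotate k₁ ∈ cyclicClosure R := mem_cc_rotate hr₀ k₁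
    have hmem₂ : r'.rotate k₂ ∈ cyclicClosure R := mem_cc_rotate hr' k₂
    have hne12 : r₀.rotate k₁ ≠ r'.rotate k₂ := by
      intro he
      have hlen12 : r₀.length = m' := by
        have := congrArg List.length he
        simpa [List.length_rotate] using this
      exact absurd (hN₆ m' (hlen12 ▸ hlen)) (not_le.mpr hg)
    have hpiece : IsPiece R p :=
      ⟨_, hmem₁, _, hmem₂, hne12, ⟨y₁, h₁.symm⟩, ⟨y₂, h₂.symm⟩⟩
    have h5 := hSC p hpiece r' hr' hpr'
    rw [← hm'] at h5
    linarith

end SmallCancel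

open SmallCancel

/-- Lemma 3.7 of the paper. Let `G = ⟨S|R⟩` be a `C'(1/6)`-group.
If there is no sublinear exhaustion for `(S,R)` (i.e. the Morse boundary of `G` is
not σ-compact), then `G` satisfies the IPSC. -/
theorem no_sublinear_exhaustion_implies_IPSC {S : Type} [Finite S]
    (R : Set (Word S)) (hRcyc : ∀ r ∈ R, CyclicallyReduced r)
    (hSC : SmallCancellation R (1/6))
    (hno : ¬ SublinearExhaustion R) :
    IPSC R := by
  classical
  by_cases hdeg : ∀ r ∈ cyclicClosure R, r = ([] : Word S)
  · -- all relators trivial: the constant-zero family is a sublinear exhaustion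
    exfalso
    apply hno
    refine ⟨fun _ _ => 0, fun i => ?_, fun i t => le_rfl, fun γ _ _ => ⟨0, fun t => ?_⟩⟩
    · rw [Sublinear]
      simp only [zero_div]
      exact tendsto_const_nhds
    · have h0 : intersectionFn R γ t = 0 := by
        apply Nat.le_zero.mp
        apply csSup_le'
        rintro nn ⟨w, ⟨r, hr, -, hinf⟩, -, rfl⟩
        have hre : r = [] := hdeg r hr
        subst hre
        simpa using hinf.length_le
      rw [h0]
      simp
  · push_neg at hdeg
    obtain ⟨rne, hrnemem, hrne⟩ := hdeg
    have hne : ∀ r ∈ cyclicClosure R, r ≠ [] := by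
      intro r hr h0
      have hccnil : ([] : Word S) ∈ cyclicClosure R := h0 ▸ hr
      have hpiece : IsPiece R ([] : Word S) :=
        ⟨[], hccnil, rne, hrnemem, fun he => hrne he.symm,
          List.nil_prefix, List.nil_prefix⟩
      have := hSC [] hpiece [] hccnil (List.nil_infix)
      simp at this
    intro n hn
    have hdom : ¬ (∀ γ : ℕ → S × Bool, IsGeodesicRay R γ →
        Sublinear (fun t => (intersectionFn R γ t : ℝ)) →
        ∃ i, ∀ t, (intersectionFn R γ t : ℝ) ≤ ρfam n i t) := by
      intro hdom
      exact hno ⟨ρfam n, fun j => sublinear_ρfam n j,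
        fun j t => ρfam_mono n j t, hdom⟩
    push_neg at hdom
    obtain ⟨γ, hgeo, hsubγ, hfail⟩ := hdom
    set ρg : ℕ → ℝ := fun k => (intersectionFn R γ k : ℝ) with hρg
    have hρ0 : ∀ k, 0 ≤ ρg k := fun k => Nat.cast_nonneg _
    have hgT : Filter.Tendsto (gfn ρg) Filter.atTop Filter.atTop :=
      gfn_tendsto hρ0 hsubγ
    obtain ⟨N₆, hN₆⟩ := Filter.eventually_atTop.mp (hgT.eventually_ge_atTop 6)
    refine ⟨fun m => max 6 (gfn ρg m),
      ⟨fun a b hab => max_le_max le_rfl (gfn_mono hρ0 hab),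
       fun m => le_max_left _ _,
       Filter.tendsto_atTop_mono (fun m => le_max_right 6 (gfn ρg m)) hgT⟩, ?_⟩
    intro K
    set j₁ : ℕ := max K 1 with hj₁
    set j₂ : ℕ := N₆ + n j₁ with hj₂
    obtain ⟨t, ht⟩ := hfail (Nat.pair j₁ j₂)
    set St := {nn | ∃ w : Word S,
        (∃ r ∈ cyclicClosure R, r.length ≤ t ∧ w <:+: r) ∧
        (∃ m, w <:+: rayPrefix γ m) ∧ w.length = nn} with hSt
    have hIF : intersectionFn R γ t = sSup St := rfl
    have hbdd : BddAbove St := by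
      refine ⟨t, ?_⟩
      rintro nn ⟨w, ⟨r, hr, hrt, hinf⟩, -, rfl⟩
      exact hinf.length_le.trans hrt
    have hρnn := ρfam_nonneg n (Nat.pair j₁ j₂) t
    have hSne : St.Nonempty := by
      by_contra hemp
      rw [Set.not_nonempty_iff_eq_empty] at hemp
      have h0 : intersectionFn R γ t = 0 := by rw [hIF, hemp]; exact csSup_empty
      have ht' : ρfam n (Nat.pair j₁ j₂) t < ρg t := ht
      rw [hρg] at ht'
      simp only [h0, Nat.cast_zero] at ht'
      linarith
    obtain ⟨w, ⟨r, hr, hrt, hwr⟩, hwγ, hwlen⟩ := Nat.sSup_mem hSne hbdd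
    have hkey : ρfam n (Nat.pair j₁ j₂) t < (w.length : ℝ) := by
      rw [hwlen, ← hIF]
      exact ht
    set m := r.length with hm
    have h1 : ((j₂ : ℝ)) + cfn n j₁ m ≤ ρfam n (Nat.pair j₁ j₂) t := by
      have h2 := le_rawρ n (Nat.pair j₁ j₂) hrt
      rw [Nat.unpair_pair] at h2
      exact h2.trans (rawρ_le_ρfam n _ t)
    have hcfn0 : 0 ≤ cfn n j₁ m := cfn_nonneg n j₁ m
    have hj₂w : (j₂ : ℝ) < w.length := by linarith
    have hj₂w' : j₂ < w.length := by exact_mod_cast hj₂w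
    have hwm : w.length ≤ m := hwr.length_le
    have hN₆m : N₆ ≤ m := by omega
    have hnj₁m : n j₁ ≤ m := by omega
    have hcfneq : cfn n j₁ m = bfn n j₁ m := if_pos hnj₁m
    have hblt : bfn n j₁ m < (w.length : ℝ) := by
      rw [hcfneq] at h1
      have : (0 : ℝ) ≤ j₂ := Nat.cast_nonneg _
      linarith
    have hbne : {x : ℝ | ∃ i : ℕ, j₁ ≤ i ∧ n i ≤ m ∧ x = (m : ℝ) / i}.Nonempty :=
      ⟨(m : ℝ) / j₁, j₁, le_rfl, hnj₁m, rfl⟩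
    rw [show bfn n j₁ m = sInf {x : ℝ | ∃ i : ℕ, j₁ ≤ i ∧ n i ≤ m ∧ x = (m : ℝ) / i}
      from rfl] at hblt
    obtain ⟨x, ⟨i, hji, hnim, rfl⟩, hxlt⟩ := exists_lt_of_csInf_lt hbne hblt
    obtain ⟨k, y, hrot⟩ := rotate_infix_eq hwr
    have hr₀mem : w ++ y ∈ cyclicClosure R := hrot ▸ mem_cc_rotate hr k
    have hlenr₀ : (w ++ y).length = m := by rw [← hrot, List.length_rotate]
    refine ⟨i, le_trans (le_max_left K 1) hji, w, y, hr₀mem, ?_, ?_, ?_⟩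
    · rw [hlenr₀]; exact hnim
    · rw [hlenr₀]; exact hxlt.le
    · exact pair_cprime_of_ray hSC hne γ N₆ hN₆ hr₀mem (List.prefix_append w y)
        (by rw [hlenr₀]; exact hN₆m) hwγ
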